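/- Let r ≥ 3, 𝔞 = (x_1^2,...,x_r^2), and let Ann(g) be the apolarity annihilator of the elementary symmetric polynomial g of degree r-2. Then the colon ideal J = (𝔞 : Ann(g)) equals (x_1^2, x_2^2, ..., x_r^2, (x_1 + x_2 + ··· + x_r)^2). -/

import Mathlib

open MvPolynomial

/-- The differential operator `∂^m` (apply `∂/∂X i` exactly `m i` times for each `i`). -/
noncomputable def pderivMulti {K : Type*} [CommSemiring K] {r : ℕ} (m : Fin r → ℕ)
    (g : MvPolynomial (Fin r) K) : MvPolynomial (Fin r) K :=
  (List.finRange r).foldr (fun i p => (⇑(pderiv i))^[m i] p) g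

/-- The apolarity action `f ∘ g`. -/
noncomputable def apol {K : Type*} [CommSemiring K] {r : ℕ}
    (f g : MvPolynomial (Fin r) K) : MvPolynomial (Fin r) K :=
  ∑ m ∈ f.support, f.coeff m • pderivMulti (⇑m) g

namespace Stmt7Aux

open Finset

lemma descFactorial_add' (n a b : ℕ) :
    n.descFactorial (a + b) = (n - b).descFactorial a * n.descFactorial b := by
  induction a with
  | zero => simp
  | succ a ih =>
      rw [show a + 1 + b = (a + b) + 1 by ring, Nat.descFactorial_succ,
        Nat.descFactorial_succ, ih, Nat.sub_sub, Nat.add_comm a b]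
      ring

variable {K : Type*} [Field K] [CharZero K] {r : ℕ}

lemma pderiv_iterate_monomial (i : Fin r) (k : ℕ) (e : Fin r →₀ ℕ) (c : K) :
    (⇑(pderiv i))^[k] (monomial e c) =
      monomial (e - Finsupp.single i k) (((e i).descFactorial k : ℕ) * c) := by
  induction k with
  | zero => simp
  | succ k ih =>
      rw [Function.iterate_succ_apply', ih, pderiv_monomial]
      have he : e - Finsupp.single i k - Finsupp.single i 1 = e - Finsupp.single i (k + 1) := by
        rw [tsub_tsub, ← Finsupp.single_add]
      have hei : (e - Finsupp.single i k) i = e i - k := by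
        rw [Finsupp.tsub_apply, Finsupp.single_eq_same]
      rw [he, hei, Nat.descFactorial_succ]
      push_cast
      ring_nf

lemma foldr_pderiv_monomial (mf : Fin r → ℕ) (ℓ : List (Fin r)) (hℓ : ℓ.Nodup)
    (n : Fin r →₀ ℕ) (c : K) :
    ℓ.foldr (fun i p => (⇑(pderiv i))^[mf i] p) (monomial n c) =
      monomial (n - ∑ i ∈ ℓ.toFinset, Finsupp.single i (mf i))
        ((∏ i ∈ ℓ.toFinset, (n i).descFactorial (mf i) : ℕ) * c) := by
  induction ℓ with
  | nil => simp
  | cons i t ih =>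
      obtain ⟨hi, ht⟩ := List.nodup_cons.mp hℓ
      have hnotmem : i ∉ t.toFinset := by simpa using hi
      have happ : (∑ j ∈ t.toFinset, Finsupp.single j (mf j)) i = 0 := by
        rw [Finsupp.finset_sum_apply]
        exact Finset.sum_eq_zero fun j hj =>
          Finsupp.single_eq_of_ne (by rintro rfl; exact hnotmem hj)
      rw [List.foldr_cons, ih ht, pderiv_iterate_monomial]
      have hexp : n - (∑ j ∈ t.toFinset, Finsupp.single j (mf j)) - Finsupp.single i (mf i)
          = n - ∑ j ∈ (i :: t).toFinset, Finsupp.single j (mf j) := by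
        rw [tsub_tsub, List.toFinset_cons, Finset.sum_insert hnotmem, add_comm]
      have hval : (n - ∑ j ∈ t.toFinset, Finsupp.single j (mf j)) i = n i := by
        rw [Finsupp.tsub_apply, happ, Nat.sub_zero]
      rw [hexp, hval, List.toFinset_cons, Finset.prod_insert hnotmem]
      congr 1
      push_cast
      ring

lemma sum_single_apply (mf : Fin r → ℕ) (j : Fin r) :
    (∑ i, Finsupp.single i (mf i)) j = mf j := by
  rw [Finsupp.finset_sum_apply]
  simp [Finsupp.single_apply]

lemma sum_single_finsupp (m : Fin r →₀ ℕ) : (∑ i, Finsupp.single i (m i)) = m := by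
  ext j; exact sum_single_apply _ j

lemma pderivMulti_monomial (mf : Fin r → ℕ) (n : Fin r →₀ ℕ) (c : K) :
    pderivMulti mf (monomial n c) =
      monomial (n - ∑ i, Finsupp.single i (mf i))
        ((∏ i, (n i).descFactorial (mf i) : ℕ) * c) := by
  rw [pderivMulti, foldr_pderiv_monomial mf _ (List.nodup_finRange r)]
  simp

lemma pderivMulti_monomial' (m n : Fin r →₀ ℕ) (c : K) :
    pderivMulti (⇑m) (monomial n c) =
      monomial (n - m) ((∏ i, (n i).descFactorial (m i) : ℕ) * c) := by
  rw [pderivMulti_monomial, sum_single_finsupp]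

lemma iterate_pderiv_add (i : Fin r) (k : ℕ) (p q : MvPolynomial (Fin r) K) :
    (⇑(pderiv i))^[k] (p + q) = (⇑(pderiv i))^[k] p + (⇑(pderiv i))^[k] q := by
  induction k generalizing p q with
  | zero => rfl
  | succ k ih =>
      rw [Function.iterate_succ_apply, map_add, ih, Function.iterate_succ_apply,
        Function.iterate_succ_apply]

lemma iterate_pderiv_smul (i : Fin r) (k : ℕ) (c : K) (p : MvPolynomial (Fin r) K) :
    (⇑(pderiv i))^[k] (c • p) = c • (⇑(pderiv i))^[k] p := by
  induction k generalizing p with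
  | zero => rfl
  | succ k ih =>
      rw [Function.iterate_succ_apply, Derivation.map_smul, ih, Function.iterate_succ_apply]

lemma pderivMulti_add (mf : Fin r → ℕ) (p q : MvPolynomial (Fin r) K) :
    pderivMulti mf (p + q) = pderivMulti mf p + pderivMulti mf q := by
  unfold pderivMulti
  induction List.finRange r with
  | nil => simp
  | cons i t ih => rw [List.foldr_cons, List.foldr_cons, List.foldr_cons, ih, iterate_pderiv_add]

lemma pderivMulti_smul (mf : Fin r → ℕ) (c : K) (p : MvPolynomial (Fin r) K) :
    pderivMulti mf (c • p) = c • pderivMulti mf p := by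
  unfold pderivMulti
  induction List.finRange r with
  | nil => simp
  | cons i t ih => rw [List.foldr_cons, List.foldr_cons, ih, iterate_pderiv_smul]

lemma pderivMulti_zero (mf : Fin r → ℕ) : pderivMulti mf (0 : MvPolynomial (Fin r) K) = 0 := by
  have := pderivMulti_smul mf (0 : K) (0 : MvPolynomial (Fin r) K)
  simpa using this

lemma apol_eq_sum_of_subset (f g : MvPolynomial (Fin r) K) {S : Finset (Fin r →₀ ℕ)}
    (hS : f.support ⊆ S) :
    apol f g = ∑ m ∈ S, coeff m f • pderivMulti (⇑m) g := by
  rw [apol]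
  exact Finset.sum_subset hS fun m _ hm => by
    rw [MvPolynomial.notMem_support_iff.mp hm, zero_smul]

lemma apol_add_left (f₁ f₂ g : MvPolynomial (Fin r) K) :
    apol (f₁ + f₂) g = apol f₁ g + apol f₂ g := by
  rw [apol_eq_sum_of_subset (f₁ + f₂) g
      (show (f₁ + f₂).support ⊆ f₁.support ∪ f₂.support from MvPolynomial.support_add),
    apol_eq_sum_of_subset f₁ g Finset.subset_union_left,
    apol_eq_sum_of_subset f₂ g Finset.subset_union_right, ← Finset.sum_add_distrib]
  exact Finset.sum_congr rfl fun m _ => by rw [coeff_add, add_smul]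

lemma apol_smul_left (c : K) (f g : MvPolynomial (Fin r) K) :
    apol (c • f) g = c • apol f g := by
  rw [apol_eq_sum_of_subset (c • f) g (MvPolynomial.support_smul),
    apol_eq_sum_of_subset f g (le_refl _), Finset.smul_sum]
  exact Finset.sum_congr rfl fun m _ => by
    rw [MvPolynomial.coeff_smul, smul_eq_mul, mul_smul]

lemma apol_zero_left (g : MvPolynomial (Fin r) K) : apol 0 g = 0 := by
  simp [apol]

lemma apol_monomial_left (n : Fin r →₀ ℕ) (c : K) (g : MvPolynomial (Fin r) K) :
    apol (monomial n c) g = c • pderivMulti (⇑n) g := by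
  classical
  rcases eq_or_ne c 0 with rfl | hc
  · simp [apol]
  · rw [apol, support_monomial, if_neg hc, Finset.sum_singleton, coeff_monomial, if_pos rfl]

lemma apol_add_right (f g₁ g₂ : MvPolynomial (Fin r) K) :
    apol f (g₁ + g₂) = apol f g₁ + apol f g₂ := by
  rw [apol, apol, apol, ← Finset.sum_add_distrib]
  exact Finset.sum_congr rfl fun m _ => by rw [pderivMulti_add, smul_add]

lemma apol_smul_right (c : K) (f g : MvPolynomial (Fin r) K) :
    apol f (c • g) = c • apol f g := by
  rw [apol, apol, Finset.smul_sum]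
  exact Finset.sum_congr rfl fun m _ => by rw [pderivMulti_smul, smul_comm]

lemma apol_zero_right (f : MvPolynomial (Fin r) K) : apol f 0 = 0 := by
  simp [apol, pderivMulti_zero]

/-- `apol · g` as a linear map. -/
noncomputable def apolLM (g : MvPolynomial (Fin r) K) :
    MvPolynomial (Fin r) K →ₗ[K] MvPolynomial (Fin r) K where
  toFun f := apol f g
  map_add' f₁ f₂ := apol_add_left f₁ f₂ g
  map_smul' c f := apol_smul_left c f g

@[simp] lemma apolLM_apply (g f : MvPolynomial (Fin r) K) : apolLM g f = apol f g := rfl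

lemma apol_sum_left {ι : Type*} (s : Finset ι) (f : ι → MvPolynomial (Fin r) K)
    (g : MvPolynomial (Fin r) K) :
    apol (∑ i ∈ s, f i) g = ∑ i ∈ s, apol (f i) g :=
  map_sum (apolLM g) f s

lemma apol_sub_left (f₁ f₂ g : MvPolynomial (Fin r) K) :
    apol (f₁ - f₂) g = apol f₁ g - apol f₂ g :=
  map_sub (apolLM g) f₁ f₂

lemma pderivMulti_comp (mf mg : Fin r → ℕ) (P : MvPolynomial (Fin r) K) :
    pderivMulti (fun i => mf i + mg i) P = pderivMulti mf (pderivMulti mg P) := by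
  induction P using MvPolynomial.induction_on' with
  | add p q ihp ihq => rw [pderivMulti_add, pderivMulti_add, pderivMulti_add, ihp, ihq]
  | monomial n c =>
      rw [pderivMulti_monomial, pderivMulti_monomial, pderivMulti_monomial]
      have hexp : (∑ i, Finsupp.single i (mf i + mg i)) =
          (∑ i, Finsupp.single i (mg i)) + (∑ i, Finsupp.single i (mf i)) := by
        rw [← Finset.sum_add_distrib]
        exact Finset.sum_congr rfl fun i _ => by rw [Finsupp.single_add, add_comm]
      rw [hexp, ← tsub_tsub]
      congr 1
      have hval : ∀ i : Fin r, (n - ∑ j, Finsupp.single j (mg j)) i = n i - mg i := by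
        intro i; rw [Finsupp.tsub_apply, sum_single_apply]
      have : (∏ i, (n i).descFactorial (mf i + mg i)) =
          (∏ i, ((n - ∑ j, Finsupp.single j (mg j)) i).descFactorial (mf i)) *
            ∏ i, (n i).descFactorial (mg i) := by
        rw [← Finset.prod_mul_distrib]
        exact Finset.prod_congr rfl fun i _ => by rw [hval i, descFactorial_add']
      rw [this]
      push_cast
      ring

lemma apol_mul (f g P : MvPolynomial (Fin r) K) :
    apol (f * g) P = apol f (apol g P) := by
  induction f using MvPolynomial.induction_on' with
  | add p q ihp ihq => rw [add_mul, apol_add_left, ihp, ihq, ← apol_add_left]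
  | monomial a c =>
      induction g using MvPolynomial.induction_on' with
      | add p q ihp ihq => rw [mul_add, apol_add_left, ihp, ihq, ← apol_add_right, ← apol_add_left]
      | monomial b d =>
          rw [monomial_mul, apol_monomial_left, apol_monomial_left, apol_monomial_left,
            pderivMulti_smul, smul_smul]
          congr 1
          have : ⇑(a + b) = fun i => a i + b i := by
            ext i; simp
          rw [this, pderivMulti_comp]

lemma coeff0_pderivMulti (m : Fin r →₀ ℕ) (P : MvPolynomial (Fin r) K) :
    coeff 0 (pderivMulti (⇑m) P) = (∏ i, (m i).factorial : ℕ) * coeff m P := by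
  induction P using MvPolynomial.induction_on' with
  | add p q ihp ihq => rw [pderivMulti_add, coeff_add, coeff_add, ihp, ihq, mul_add]
  | monomial n c =>
      rw [pderivMulti_monomial', coeff_monomial, coeff_monomial]
      by_cases h : n = m
      · subst h
        rw [if_pos rfl, if_pos (tsub_self n)]
        congr 2
        exact Finset.prod_congr rfl fun i _ => (Nat.descFactorial_self (n i))
      · rw [if_neg h, mul_zero]
        by_cases h2 : n - m = 0
        · have hle : n ≤ m := tsub_eq_zero_iff_le.mp h2
          have : ∃ i, n i < m i := by
            by_contra hc
            push_neg at hc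
            exact h (le_antisymm hle (Finsupp.le_def.mpr hc))
          obtain ⟨i, hi⟩ := this
          rw [if_pos h2]
          have : (∏ i, (n i).descFactorial (m i)) = 0 :=
            Finset.prod_eq_zero (Finset.mem_univ i) (Nat.descFactorial_eq_zero_iff_lt.mpr hi)
          rw [this]
          simp
        · rw [if_neg h2]

lemma coeff0_apol (f P : MvPolynomial (Fin r) K) :
    coeff 0 (apol f P) =
      ∑ m ∈ f.support, ((∏ i, (m i).factorial : ℕ) * coeff m f * coeff m P) := by
  rw [apol, coeff_sum]
  exact Finset.sum_congr rfl fun m _ => by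
    rw [MvPolynomial.coeff_smul, coeff0_pderivMulti, smul_eq_mul]; ring

lemma coeff0_apol_of_subset (f P : MvPolynomial (Fin r) K) {S : Finset (Fin r →₀ ℕ)}
    (hS : f.support ⊆ S) :
    coeff 0 (apol f P) =
      ∑ m ∈ S, ((∏ i, (m i).factorial : ℕ) * coeff m f * coeff m P) := by
  rw [coeff0_apol]
  exact Finset.sum_subset hS fun m _ hm => by
    rw [MvPolynomial.notMem_support_iff.mp hm, mul_zero, zero_mul]

lemma coeff0_apol_comm (f P : MvPolynomial (Fin r) K) :
    coeff 0 (apol f P) = coeff 0 (apol P f) := by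
  rw [coeff0_apol_of_subset f P (Finset.subset_union_left (s₂ := P.support)),
    coeff0_apol_of_subset P f (Finset.subset_union_right (s₁ := f.support))]
  exact Finset.sum_congr rfl fun m _ => by ring

lemma pair_monomial_left (n : Fin r →₀ ℕ) (c : K) (P : MvPolynomial (Fin r) K) :
    coeff 0 (apol (monomial n c) P) = (∏ i, (n i).factorial : ℕ) * c * coeff n P := by
  rw [apol_monomial_left, MvPolynomial.coeff_smul, coeff0_pderivMulti, smul_eq_mul]; ring

lemma pair_monomial_right (n : Fin r →₀ ℕ) (c : K) (P : MvPolynomial (Fin r) K) :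
    coeff 0 (apol P (monomial n c)) = (∏ i, (n i).factorial : ℕ) * c * coeff n P := by
  rw [← coeff0_apol_comm, pair_monomial_left]

lemma factorial_prod_ne_zero (n : Fin r →₀ ℕ) :
    ((∏ i, (n i).factorial : ℕ) : K) ≠ 0 := by
  rw [Nat.cast_ne_zero]
  exact Finset.prod_ne_zero_iff.mpr fun i _ => (Nat.factorial_pos (n i)).ne'

lemma eq_zero_of_forall_pair (Q : MvPolynomial (Fin r) K)
    (h : ∀ n : Fin r →₀ ℕ, coeff 0 (apol (monomial n 1) Q) = 0) : Q = 0 := by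
  ext n
  have := h n
  rw [pair_monomial_left, mul_one] at this
  rw [coeff_zero]
  exact (mul_eq_zero.mp this).resolve_left (factorial_prod_ne_zero n)

/-! ### The polynomial `F = ∏ X i` -/

lemma prod_X_eq (s : Finset (Fin r)) :
    (∏ i ∈ s, X i : MvPolynomial (Fin r) K) =
      monomial (∑ i ∈ s, Finsupp.single i 1) 1 := by
  induction s using Finset.induction with
  | empty => simp
  | insert _ _ h ih =>
      rw [Finset.prod_insert h, ih, Finset.sum_insert h, ← pow_one (X _), X_pow_eq_monomial,
        monomial_mul, one_mul]

/-- The all-ones exponent. -/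
noncomputable def uF (r : ℕ) : Fin r →₀ ℕ := ∑ i, Finsupp.single i 1

lemma uF_apply (j : Fin r) : uF r j = 1 := sum_single_apply _ j

lemma F_eq : (∏ i, X i : MvPolynomial (Fin r) K) = monomial (uF r) 1 := prod_X_eq _

lemma pair_F (f : MvPolynomial (Fin r) K) :
    coeff 0 (apol f (∏ i, X i : MvPolynomial (Fin r) K)) = coeff (uF r) f := by
  rw [F_eq, pair_monomial_right]
  have : (∏ i, ((uF r) i).factorial) = 1 :=
    Finset.prod_eq_one fun i _ => by rw [uF_apply]; rfl
  rw [this]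
  push_cast
  ring

lemma apol_F_of_mem (q : MvPolynomial (Fin r) K)
    (hq : q ∈ Ideal.span (Set.range fun i : Fin r => (X i : MvPolynomial (Fin r) K) ^ 2)) :
    apol q (∏ i, X i) = 0 := by
  induction hq using Submodule.span_induction with
  | mem x hx =>
      obtain ⟨i, rfl⟩ := hx
      show apol ((X i : MvPolynomial (Fin r) K) ^ 2) (∏ i, X i) = 0
      rw [X_pow_eq_monomial, apol_monomial_left, one_smul, F_eq, pderivMulti_monomial']
      have : (∏ j, ((uF r) j).descFactorial ((Finsupp.single i 2) j)) = 0 := by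
        refine Finset.prod_eq_zero (Finset.mem_univ i) ?_
        rw [uF_apply, Finsupp.single_eq_same]
        rfl
      rw [this]
      simp
  | zero => exact apol_zero_left _
  | add x y _ _ hx hy => rw [apol_add_left, hx, hy, add_zero]
  | smul a x _ hx => rw [smul_eq_mul, apol_mul, hx, apol_zero_right]

lemma mem_span_of_apol_F (q : MvPolynomial (Fin r) K)
    (hq : apol q (∏ i, X i) = 0) :
    q ∈ Ideal.span (Set.range fun i : Fin r => (X i : MvPolynomial (Fin r) K) ^ 2) := by
  have key : ∀ m : Fin r →₀ ℕ, m ≤ uF r → coeff m q = 0 := by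
    intro m hm
    have h0 : coeff 0 (apol (monomial (uF r - m) 1 * q) (∏ i, X i)) = 0 := by
      rw [apol_mul, hq, apol_zero_right, coeff_zero]
    rw [pair_F] at h0
    have huF : (uF r - m) + m = uF r := tsub_add_cancel_of_le hm
    have hcm : coeff (uF r) ((monomial (uF r - m)) 1 * q) = 1 * coeff m q := by
      have := coeff_monomial_mul m (uF r - m) (1 : K) q
      rwa [huF] at this
    rw [hcm, one_mul] at h0
    exact h0
  rw [MvPolynomial.as_sum q]
  refine Ideal.sum_mem _ fun k hk => ?_
  have hknot : ¬ k ≤ uF r := by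
    intro hle
    exact MvPolynomial.mem_support_iff.mp hk (key k hle)
  have : ∃ i, 2 ≤ k i := by
    by_contra hc
    push_neg at hc
    refine hknot (Finsupp.le_def.mpr fun i => ?_)
    have := hc i
    rw [uF_apply]
    omega
  obtain ⟨i, hi⟩ := this
  have hsub : Finsupp.single i 2 ≤ k := by
    rw [Finsupp.single_le_iff]
    exact hi
  have : (monomial k) (coeff k q) =
      (monomial (k - Finsupp.single i 2)) (coeff k q) * (X i) ^ 2 := by
    rw [X_pow_eq_monomial, monomial_mul, mul_one, tsub_add_cancel_of_le hsub]
  rw [this]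
  exact Ideal.mul_mem_left _ _ (Ideal.subset_span ⟨i, rfl⟩)

/-! ### The computation `L² ∘ F = 2 e_{r-2}` -/

lemma sum_single_one_apply (S : Finset (Fin r)) (j : Fin r) :
    (∑ t ∈ S, Finsupp.single t (1 : ℕ)) j = if j ∈ S then 1 else 0 := by
  rw [Finsupp.finset_sum_apply]
  simp [Finsupp.single_apply]

lemma apol_L2_F (hr : 2 ≤ r) :
    apol ((∑ i, X i) * (∑ i, X i)) (∏ i, X i : MvPolynomial (Fin r) K) =
      (2 : K) • esymm (Fin r) K (r - 2) := by
  classical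
  have hterm : ∀ i j : Fin r, apol (X i * X j) (∏ i, X i : MvPolynomial (Fin r) K) =
      if i = j then 0 else
        monomial (uF r - (Finsupp.single i 1 + Finsupp.single j 1)) 1 := by
    intro i j
    have hX : (X i * X j : MvPolynomial (Fin r) K) =
        monomial (Finsupp.single i 1 + Finsupp.single j 1) 1 := by
      rw [← pow_one (X i), ← pow_one (X j), X_pow_eq_monomial, X_pow_eq_monomial,
        monomial_mul, mul_one]
    rw [hX, apol_monomial_left, one_smul, F_eq, pderivMulti_monomial']
    by_cases hij : i = j
    · subst hij
      rw [if_pos rfl]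
      have : (∏ t, ((uF r) t).descFactorial
          ((Finsupp.single i 1 + Finsupp.single i 1 : Fin r →₀ ℕ) t)) = 0 := by
        refine Finset.prod_eq_zero (Finset.mem_univ i) ?_
        rw [uF_apply, Finsupp.add_apply, Finsupp.single_eq_same]
        rfl
      rw [this]
      simp
    · rw [if_neg hij]
      have : (∏ t, ((uF r) t).descFactorial
          ((Finsupp.single i 1 + Finsupp.single j 1 : Fin r →₀ ℕ) t)) = 1 := by
        refine Finset.prod_eq_one fun t _ => ?_
        rw [uF_apply, Finsupp.add_apply, Finsupp.single_apply, Finsupp.single_apply]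
        by_cases hti : i = t <;> by_cases htj : j = t <;>
          first
          | (exfalso; exact hij (hti.trans htj.symm))
          | simp [hti, htj]
      rw [this]
      norm_num
  have hexp : ∀ i j : Fin r, i ≠ j →
      uF r - (Finsupp.single i 1 + Finsupp.single j 1) =
        ∑ t ∈ Finset.univ \ {i, j}, Finsupp.single t (1 : ℕ) := by
    intro i j hij
    ext t
    rw [Finsupp.tsub_apply, uF_apply, Finsupp.add_apply, sum_single_one_apply]
    rw [Finsupp.single_apply, Finsupp.single_apply]
    by_cases hti : i = t <;> by_cases htj : j = t <;>
      simp_all [Finset.mem_sdiff, eq_comm]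
  -- expand the product of sums
  rw [Finset.sum_mul_sum, apol_sum_left]
  have step1 : ∀ i : Fin r, apol (∑ j, X i * X j) (∏ i, X i : MvPolynomial (Fin r) K) =
      ∑ j, apol (X i * X j) (∏ i, X i : MvPolynomial (Fin r) K) := fun i =>
    apol_sum_left _ _ _
  rw [Finset.sum_congr rfl fun i _ => step1 i]
  rw [Finset.sum_congr rfl fun i _ => Finset.sum_congr rfl fun j _ => hterm i j]
  rw [← Finset.sum_product' (s := Finset.univ) (t := Finset.univ)]
  -- kill the diagonal
  have step2 :
      (∑ p ∈ Finset.univ ×ˢ Finset.univ,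
        if p.1 = p.2 then 0 else
          (monomial (uF r - (Finsupp.single p.1 1 + Finsupp.single p.2 1)) (1 : K))) =
      ∑ p ∈ (Finset.univ ×ˢ Finset.univ).filter (fun p : Fin r × Fin r => ¬ p.1 = p.2),
          (monomial (uF r - (Finsupp.single p.1 1 + Finsupp.single p.2 1)) (1 : K)) := by
    rw [Finset.sum_filter]
    exact Finset.sum_congr rfl fun p _ => by split_ifs with h <;> simp [h]
  rw [step2]
  -- group fibers over the complementary (r-2)-subset
  set D := (Finset.univ ×ˢ Finset.univ).filter (fun p : Fin r × Fin r => ¬ p.1 = p.2) with hD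
  have hmaps : ∀ p ∈ D, Finset.univ \ {p.1, p.2} ∈
      Finset.powersetCard (r - 2) (Finset.univ : Finset (Fin r)) := by
    intro p hp
    rw [hD, Finset.mem_filter] at hp
    rw [Finset.mem_powersetCard]
    refine ⟨Finset.sdiff_subset, ?_⟩
    rw [Finset.card_sdiff_of_subset (Finset.subset_univ _), Finset.card_univ, Fintype.card_fin]
    rw [Finset.card_insert_of_notMem (by simpa using hp.2), Finset.card_singleton]
  rw [← Finset.sum_fiberwise_of_maps_to hmaps]
  -- each fiber contributes 2 • monomial
  have hfiber : ∀ T ∈ Finset.powersetCard (r - 2) (Finset.univ : Finset (Fin r)),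
      (∑ p ∈ D.filter (fun p => Finset.univ \ {p.1, p.2} = T),
        (monomial (uF r - (Finsupp.single p.1 1 + Finsupp.single p.2 1)) (1 : K))) =
      (2 : K) • monomial (∑ t ∈ T, Finsupp.single t (1 : ℕ)) (1 : K) := by
    intro T hT
    obtain ⟨hTsub, hTcard⟩ := Finset.mem_powersetCard.mp hT
    have hcompl : (Finset.univ \ T).card = 2 := by
      rw [Finset.card_sdiff_of_subset (Finset.subset_univ _), Finset.card_univ, Fintype.card_fin, hTcard]
      omega
    obtain ⟨a, b, hab, hab2⟩ := Finset.card_eq_two.mp hcompl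
    have hTc : T = Finset.univ \ ({a, b} : Finset (Fin r)) := by
      rw [← hab2, Finset.sdiff_sdiff_self_left, Finset.univ_inter]
    have hfil : D.filter (fun p : Fin r × Fin r => Finset.univ \ {p.1, p.2} = T) =
        {(a, b), (b, a)} := by
      ext ⟨p1, p2⟩
      simp only [Finset.mem_filter, hD, Finset.mem_insert, Finset.mem_singleton,
        Finset.mem_product, Finset.mem_univ, true_and, Prod.mk.injEq]
      constructor
      · rintro ⟨hne, hTeq⟩
        have hpair : ({p1, p2} : Finset (Fin r)) = {a, b} := by
          have := congrArg (fun s => (Finset.univ : Finset (Fin r)) \ s) hTeq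
          rw [Finset.sdiff_sdiff_self_left, Finset.univ_inter, hTc,
            Finset.sdiff_sdiff_self_left, Finset.univ_inter] at this
          exact this
        have hp1 : p1 ∈ ({a, b} : Finset (Fin r)) := by
          rw [← hpair]; exact Finset.mem_insert_self _ _
        have hp2 : p2 ∈ ({a, b} : Finset (Fin r)) := by
          rw [← hpair]; exact Finset.mem_insert_of_mem (Finset.mem_singleton_self _)
        rw [Finset.mem_insert, Finset.mem_singleton] at hp1 hp2
        rcases hp1 with rfl | rfl
        · left
          rcases hp2 with rfl | rfl
          · exact absurd rfl hne
          · exact ⟨rfl, rfl⟩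
        · right
          rcases hp2 with rfl | rfl
          · exact ⟨rfl, rfl⟩
          · exact absurd rfl hne
      · rintro (⟨rfl, rfl⟩ | ⟨rfl, rfl⟩)
        · exact ⟨hab, by rw [hTc]⟩
        · refine ⟨hab.symm, ?_⟩
          rw [hTc]
          congr 1
          exact Finset.pair_comm _ _
    rw [hfil]
    have hmon : ∀ i j : Fin r, i ≠ j → ({i, j} : Finset (Fin r)) = {a, b} →
        (monomial (uF r - (Finsupp.single i 1 + Finsupp.single j 1)) (1 : K)) =
          monomial (∑ t ∈ T, Finsupp.single t (1 : ℕ)) (1 : K) := by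
      intro i j hij hpair
      rw [hexp i j hij, hTc, ← hpair]
    have h1 : ((a, b) : Fin r × Fin r) ≠ (b, a) := by
      intro h
      exact hab (congrArg Prod.fst h)
    rw [Finset.sum_pair h1]
    rw [hmon a b hab rfl, hmon b a hab.symm (Finset.pair_comm b a)]
    rw [two_smul]
  rw [Finset.sum_congr rfl hfiber, esymm, Finset.smul_sum]
  exact Finset.sum_congr rfl fun T _ => by rw [prod_X_eq]

/-! ### Degree bounds -/

lemma finsupp_sum_le (a b : Fin r →₀ ℕ) (h : a ≤ b) :
    (a.sum fun _ k => k) ≤ b.sum fun _ k => k := by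
  rw [Finsupp.sum_fintype _ _ (fun _ => rfl), Finsupp.sum_fintype _ _ (fun _ => rfl)]
  exact Finset.sum_le_sum fun i _ => Finsupp.le_def.mp h i

lemma pderivMulti_sum {ι : Type*} (mf : Fin r → ℕ) (s : Finset ι)
    (f : ι → MvPolynomial (Fin r) K) :
    pderivMulti mf (∑ i ∈ s, f i) = ∑ i ∈ s, pderivMulti mf (f i) := by
  induction s using Finset.cons_induction with
  | empty => simp [pderivMulti_zero]
  | cons a s ha ih => rw [Finset.sum_cons, pderivMulti_add, ih, Finset.sum_cons]

lemma totalDegree_pderivMulti_le (mf : Fin r → ℕ) (P : MvPolynomial (Fin r) K) :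
    (pderivMulti mf P).totalDegree ≤ P.totalDegree := by
  conv_lhs => rw [MvPolynomial.as_sum P]
  rw [pderivMulti_sum]
  refine totalDegree_finsetSum_le fun m hm => ?_
  rw [pderivMulti_monomial]
  refine (totalDegree_monomial_le _ _).trans ?_
  refine le_trans ?_ (MvPolynomial.le_totalDegree hm)
  exact finsupp_sum_le _ _ tsub_le_self

lemma totalDegree_apol_le (f P : MvPolynomial (Fin r) K) :
    (apol f P).totalDegree ≤ P.totalDegree := by
  rw [apol]
  refine totalDegree_finsetSum_le fun m _ => ?_
  exact (totalDegree_smul_le _ _).trans (totalDegree_pderivMulti_le _ _)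

lemma totalDegree_F_le : (∏ i, X i : MvPolynomial (Fin r) K).totalDegree ≤ r := by
  rw [F_eq]
  refine (totalDegree_monomial_le _ _).trans ?_
  rw [Finsupp.sum_fintype _ _ (fun _ => rfl)]
  simp [uF_apply]

lemma totalDegree_esymm_le (n : ℕ) (hn : n ≤ r) :
    (esymm (Fin r) K n).totalDegree ≤ r := by
  rw [esymm]
  refine totalDegree_finsetSum_le fun T hT => ?_
  rw [prod_X_eq]
  refine (totalDegree_monomial_le _ _).trans ?_
  rw [Finsupp.sum_fintype _ _ (fun _ => rfl)]
  have : ∀ j : Fin r, (∑ t ∈ T, Finsupp.single t (1:ℕ)) j = if j ∈ T then 1 else 0 :=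
    sum_single_one_apply T
  calc (∑ j, (∑ t ∈ T, Finsupp.single t (1:ℕ)) j) = ∑ j, if j ∈ T then 1 else 0 :=
        Finset.sum_congr rfl fun j _ => this j
    _ = T.card := by rw [Finset.sum_ite_mem, Finset.univ_inter, Finset.card_eq_sum_ones]
    _ ≤ r := by
        have := Finset.card_le_univ T
        rwa [Fintype.card_fin] at this


/-! ### The pairing on the finite-dimensional space -/

/-- The raw pairing as a bilinear map. -/
noncomputable def pairBil :
    MvPolynomial (Fin r) K →ₗ[K] MvPolynomial (Fin r) K →ₗ[K] K :=
  LinearMap.mk₂ K (fun f Q => coeff 0 (apol f Q))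
    (fun a b Q => by
      show coeff 0 (apol (a + b) Q) = coeff 0 (apol a Q) + coeff 0 (apol b Q)
      rw [apol_add_left, coeff_add])
    (fun c a Q => by
      show coeff 0 (apol (c • a) Q) = c • coeff 0 (apol a Q)
      rw [apol_smul_left, MvPolynomial.coeff_smul])
    (fun f a b => by
      show coeff 0 (apol f (a + b)) = coeff 0 (apol f a) + coeff 0 (apol f b)
      rw [apol_add_right, coeff_add])
    (fun c f a => by
      show coeff 0 (apol f (c • a)) = c • coeff 0 (apol f a)
      rw [apol_smul_right, MvPolynomial.coeff_smul])

/-- The pairing `Q ↦ (f ↦ ⟨f, Q⟩)` on polynomials of total degree at most `N`. -/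
noncomputable def pairLM (N : ℕ) :
    restrictTotalDegree (Fin r) K N →ₗ[K]
      Module.Dual K (restrictTotalDegree (Fin r) K N) :=
  ((pairBil.comp (restrictTotalDegree (Fin r) K N).subtype).flip.comp
    (restrictTotalDegree (Fin r) K N).subtype)

lemma pairLM_apply (N : ℕ) (Q f : restrictTotalDegree (Fin r) K N) :
    pairLM N Q f = coeff 0 (apol f.1 Q.1) := rfl

lemma pairLM_surjective (N : ℕ) :
    Function.Surjective (pairLM (K := K) (r := r) N) := by
  have hinj : Function.Injective (pairLM (K := K) (r := r) N) := by
    rw [← LinearMap.ker_eq_bot, LinearMap.ker_eq_bot']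
    intro Q hQ
    have hQ1 : Q.1 = 0 := by
      ext m
      by_cases hm : coeff m Q.1 = 0
      · rw [hm, coeff_zero]
      · exfalso
        have hmem : m ∈ Q.1.support := MvPolynomial.mem_support_iff.mpr hm
        have hmdeg : (monomial m (1 : K)).totalDegree ≤ N :=
          (totalDegree_monomial_le _ _).trans
            ((MvPolynomial.le_totalDegree hmem).trans
              ((mem_restrictTotalDegree _ _ _).mp Q.2))
        have := LinearMap.congr_fun hQ (⟨monomial m 1,
          (mem_restrictTotalDegree _ _ _).mpr hmdeg⟩ : restrictTotalDegree (Fin r) K N)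
        rw [pairLM_apply, LinearMap.zero_apply] at this
        rw [pair_monomial_left, mul_one] at this
        exact hm ((mul_eq_zero.mp this).resolve_left (factorial_prod_ne_zero m))
    exact Subtype.ext hQ1
  exact (LinearMap.injective_iff_surjective_of_finrank_eq_finrank
    (Subspace.dual_finrank_eq (V := restrictTotalDegree (Fin r) K N)).symm).mp hinj

end Stmt7Aux

open Stmt7Aux

theorem stmt7 (K : Type*) [Field K] [CharZero K] (r : ℕ) (hr : 3 ≤ r) :
    (Ideal.span (Set.range fun i : Fin r => (X i : MvPolynomial (Fin r) K) ^ 2)).colon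
        (Ideal.span {f : MvPolynomial (Fin r) K | apol f (esymm (Fin r) K (r - 2)) = 0}) =
      Ideal.span ((Set.range fun i : Fin r => (X i : MvPolynomial (Fin r) K) ^ 2) ∪
        {(∑ i : Fin r, X i) ^ 2}) := by
  classical
  set G : MvPolynomial (Fin r) K := esymm (Fin r) K (r - 2) with hGdef
  set F : MvPolynomial (Fin r) K := ∏ i, X i with hFdef
  set L : MvPolynomial (Fin r) K := ∑ i, X i with hLdef
  set A : Ideal (MvPolynomial (Fin r) K) :=
    Ideal.span (Set.range fun i : Fin r => (X i : MvPolynomial (Fin r) K) ^ 2) with hAdef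
  set I : Ideal (MvPolynomial (Fin r) K) :=
    Ideal.span {f : MvPolynomial (Fin r) K | apol f G = 0} with hIdef
  have hL2 : apol (L * L) F = (2 : K) • G := apol_L2_F (by omega)
  have hA_le : A ≤ Ideal.span ((Set.range fun i : Fin r =>
      (X i : MvPolynomial (Fin r) K) ^ 2) ∪ {(∑ i : Fin r, X i) ^ 2}) :=
    Ideal.span_mono Set.subset_union_left
  apply le_antisymm
  · -- hard direction
    intro h hh
    have hcolon : ∀ p ∈ I, h * p ∈ A := fun p hp => by
      have := Submodule.mem_colon.mp hh p hp
      rwa [smul_eq_mul] at this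
    set P : MvPolynomial (Fin r) K := apol h F with hPdef
    have hPdeg : P ∈ restrictTotalDegree (Fin r) K r :=
      (mem_restrictTotalDegree _ _ _).mpr
        ((totalDegree_apol_le h F).trans totalDegree_F_le)
    set V := restrictTotalDegree (Fin r) K r
    -- the subspace of derivatives of G
    set T : MvPolynomial (Fin r) K →ₗ[K] V :=
      LinearMap.codRestrict V (apolLM G) (fun θ =>
        (mem_restrictTotalDegree _ _ _).mpr
          ((totalDegree_apol_le θ G).trans (totalDegree_esymm_le _ (by omega)))) with hTdef
    set W : Submodule K V := LinearMap.range T with hWdef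
    have hPmem : (⟨P, hPdeg⟩ : V) ∈ W := by
      rw [← Subspace.dualAnnihilator_dualCoannihilator_eq (W := W)]
      rw [Submodule.mem_dualCoannihilator]
      intro φ hφ
      obtain ⟨Q, rfl⟩ := pairLM_surjective r φ
      -- first: Q annihilates G
      have hQG : apol Q.1 G = 0 := by
        apply eq_zero_of_forall_pair
        intro n
        have hw := (Submodule.mem_dualAnnihilator _).mp hφ (T (monomial n 1)) ⟨_, rfl⟩
        have hTval : (T (monomial n 1)).1 = apol (monomial n 1) G := rfl
        have : coeff 0 (apol (apol (monomial n 1) G) Q.1) = 0 := by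
          rw [pairLM_apply, hTval] at hw
          exact hw
        rw [coeff0_apol_comm, ← apol_mul, mul_comm, apol_mul] at this
        exact this
      have hQI : Q.1 ∈ I := Ideal.subset_span hQG
      have hQA : h * Q.1 ∈ A := hcolon Q.1 hQI
      have h2 : apol (Q.1 * h) F = 0 := by
        rw [mul_comm]
        exact apol_F_of_mem _ hQA
      show coeff 0 (apol P Q.1) = 0
      rw [coeff0_apol_comm, hPdef, ← apol_mul, h2, coeff_zero]
    obtain ⟨θ, hθ⟩ := hPmem
    have hθP : apol θ G = P := congrArg Subtype.val hθ
    -- conclude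
    have hann : apol (h - (1/2 : K) • (θ * (L * L))) F = 0 := by
      rw [apol_sub_left, apol_smul_left, apol_mul, hL2, apol_smul_right, hθP, hPdef,
        smul_smul]
      norm_num
    have hmem := mem_span_of_apol_F _ hann
    have hsplit : h = (h - (1/2 : K) • (θ * (L * L))) + ((1/2 : K) • θ) * (L * L) := by
      rw [smul_mul_assoc]
      ring
    rw [hsplit]
    refine Ideal.add_mem _ (hA_le hmem) ?_
    have hL2mem : (L * L : MvPolynomial (Fin r) K) ∈ Ideal.span ((Set.range fun i : Fin r =>
        (X i : MvPolynomial (Fin r) K) ^ 2) ∪ {(∑ i : Fin r, X i) ^ 2}) := by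
      have : (L * L : MvPolynomial (Fin r) K) = (∑ i : Fin r, X i) ^ 2 := by
        rw [pow_two, hLdef]
      rw [this]
      exact Ideal.subset_span (Set.mem_union_right _ rfl)
    exact Ideal.mul_mem_left _ _ hL2mem
  · rw [Ideal.span_le]
    rintro x (⟨i, rfl⟩ | rfl)
    · exact Submodule.mem_colon.mpr fun p hp => by
        rw [smul_eq_mul, mul_comm]
        exact Ideal.mul_mem_left _ _ (Ideal.subset_span ⟨i, rfl⟩)
    · refine Submodule.mem_colon.mpr fun p hp => ?_
      rw [smul_eq_mul, mul_comm]
      have : p * (∑ i : Fin r, X i) ^ 2 ∈ A := by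
        induction hp using Submodule.span_induction with
        | mem f hf =>
            apply mem_span_of_apol_F
            rw [← hFdef, pow_two, ← hLdef, apol_mul, hL2, apol_smul_right]
            rw [Set.mem_setOf_eq] at hf
            rw [hf, smul_zero]
        | zero => rw [zero_mul]; exact Ideal.zero_mem _
        | add a b _ _ ha hb => rw [add_mul]; exact Ideal.add_mem _ ha hb
        | smul a f _ hf =>
            rw [smul_eq_mul, mul_assoc]
            exact Ideal.mul_mem_left _ _ hf
      rw [hLdef]
      exact this
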